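/- Let Γ be a countable set, M a measurable space, and X = (X_k)_{k∈Γ} a family of random variables with values in M that has the Kolmogorov mixing property. Let E ⊆ M^Γ be a measurable event such that for every finite subset J ⊆ Γ there exists a map π : Γ → Γ which is a positional symmetry of E, satisfies π(J) ∩ J = ∅, and is such that the families X = (X_k)_{k∈Γ} and X^π = (X_{π(k)})_{k∈Γ} have the same joint distribution. Then P(X ∈ E) ∈ {0, 1}. -/
import Mathlib


open MeasureTheory ProbabilityTheory Set
open scoped symmDiff

/-- An event `V ⊆ M^Γ` is measurably determined by the coordinates in `S ⊆ Γ` if it is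
measurable with respect to the σ-algebra generated by those coordinates. -/
def DeterminedBy {Γ M : Type*} [MeasurableSpace M] (V : Set (Γ → M)) (S : Set Γ) : Prop :=
  MeasurableSet[MeasurableSpace.comap (fun (a : Γ → M) => S.restrict a) MeasurableSpace.pi] V

section aux
variable {Γ M : Type*} [MeasurableSpace M]

lemma DeterminedBy.mono {V : Set (Γ → M)} {S S' : Set Γ} (hSS : S ⊆ S')
    (h : DeterminedBy V S) : DeterminedBy V S' := by
  obtain ⟨s, hs, rfl⟩ := h
  refine ⟨(fun (b : S' → M) (i : S) => b ⟨i.1, hSS i.2⟩) ⁻¹' s,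
    (measurable_pi_lambda _ fun i => measurable_pi_apply _) hs, rfl⟩

lemma DeterminedBy.preimage {V : Set (Γ → M)} {S : Set Γ} (π : Γ → Γ)
    (h : DeterminedBy V S) :
    DeterminedBy ((fun (a : Γ → M) (k : Γ) => a (π k)) ⁻¹' V) (π '' S) := by
  obtain ⟨s, hs, rfl⟩ := h
  refine ⟨(fun (b : (π '' S) → M) (i : S) => b ⟨π i.1, ⟨i.1, i.2, rfl⟩⟩) ⁻¹' s,
    (measurable_pi_lambda _ fun i => measurable_pi_apply _) hs, rfl⟩

lemma cylinder_determinedBy {V : Set (Γ → M)} (hV : V ∈ measurableCylinders (fun _ : Γ => M)) :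
    ∃ J : Finset Γ, DeterminedBy V (↑J : Set Γ) := by
  obtain ⟨s, S, hS, rfl⟩ := (mem_measurableCylinders V).1 hV
  exact ⟨s, ⟨S, hS, rfl⟩⟩

lemma exists_cylinder_approx (μ : Measure (Γ → M)) [IsProbabilityMeasure μ]
    {E : Set (Γ → M)} (hE : MeasurableSet E) {ε : ℝ} (hε : 0 < ε) :
    ∃ V ∈ measurableCylinders (fun _ : Γ => M), μ (E ∆ V) < ENNReal.ofReal ε := by
  have halg : IsSetAlgebra (measurableCylinders (fun _ : Γ => M)) :=
    ⟨empty_mem_measurableCylinders _, fun _ hs => compl_mem_measurableCylinders hs,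
      fun _ _ hs ht => union_mem_measurableCylinders hs ht⟩
  have hdense := Measure.MeasureDense.of_generateFrom_isSetAlgebra_finite (μ := μ) halg
    generateFrom_measurableCylinders.symm
  exact hdense.approx E hE (measure_ne_top μ E) ε hε

lemma abs_toReal_sub_le (μ : Measure (Γ → M)) [IsProbabilityMeasure μ] (A B : Set (Γ → M)) :
    |(μ A).toReal - (μ B).toReal| ≤ (μ (A ∆ B)).toReal := by
  have key : ∀ C D : Set (Γ → M), (μ C).toReal - (μ D).toReal ≤ (μ (C ∆ D)).toReal := by
    intro C D
    rw [sub_le_iff_le_add, ← ENNReal.toReal_add (measure_ne_top _ _) (measure_ne_top _ _)]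
    refine ENNReal.toReal_le_toReal (measure_ne_top _ _)
      (by simp [measure_ne_top]) |>.2 ?_
    refine le_trans (measure_mono ?_) (measure_union_le _ _)
    intro x hx
    by_cases hD : x ∈ D
    · exact Or.inr hD
    · exact Or.inl (Or.inl ⟨hx, hD⟩)
  rw [abs_sub_le_iff]
  exact ⟨key A B, by rw [symmDiff_comm]; exact key B A⟩

end aux

/-- A family `X = (X_k)_{k ∈ Γ}` of `M`-valued random variables has the
**Kolmogorov mixing property** (short-range correlations) if for every cylinder event `V`
and every `ε > 0` there is a finite `K ⊆ Γ` such that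
`|P(X ∈ V ∩ W) - P(X ∈ V)·P(X ∈ W)| < ε` for every event `W` measurably determined by
the coordinates outside `K`. -/
def KolmogorovMixing {Ω Γ M : Type*} [MeasurableSpace Ω] [MeasurableSpace M]
    (Pr : Measure Ω) (X : Γ → Ω → M) : Prop :=
  ∀ (J : Finset Γ) (V : Set (Γ → M)), DeterminedBy V (↑J : Set Γ) →
    ∀ ε : ℝ, 0 < ε → ∃ K : Finset Γ,
      ∀ W : Set (Γ → M), DeterminedBy W ((↑K : Set Γ)ᶜ) →
        |(Pr {ω | (fun k => X k ω) ∈ V ∩ W}).toReal -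
          (Pr {ω | (fun k => X k ω) ∈ V}).toReal * (Pr {ω | (fun k => X k ω) ∈ W}).toReal| < ε

/-- **Zero-one law for asymptotically independent random variables.**
If the family `X` has the Kolmogorov mixing property and for every finite `J ⊆ Γ`
the event `E` has a positional symmetry `π` with `π(J) ∩ J = ∅` such that `X` and
`X^π` have the same distribution, then `P(X ∈ E) ∈ {0,1}`. -/
theorem kolmogorov_mixing_symmetric_zero_one_law
    {Ω M Γ : Type*} [MeasurableSpace Ω] [MeasurableSpace M] [Countable Γ]
    (Pr : Measure Ω) [IsProbabilityMeasure Pr]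
    (X : Γ → Ω → M) (hmeas : ∀ k, Measurable (X k))
    (hmix : KolmogorovMixing Pr X)
    (E : Set (Γ → M)) (hE : MeasurableSet E)
    (hsym : ∀ J : Finset Γ, ∃ π : Γ → Γ,
      (∀ a : Γ → M, a ∈ E ↔ (fun k => a (π k)) ∈ E) ∧
      (∀ j ∈ J, π j ∉ J) ∧
      Measure.map (fun ω (k : Γ) => X (π k) ω) Pr = Measure.map (fun ω (k : Γ) => X k ω) Pr) :
    Pr {ω | (fun k => X k ω) ∈ E} = 0 ∨ Pr {ω | (fun k => X k ω) ∈ E} = 1 := by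
  classical
  have hXm : Measurable (fun ω (k : Γ) => X k ω) := measurable_pi_lambda _ hmeas
  set μ : Measure (Γ → M) := Pr.map (fun ω k => X k ω) with hμ
  have hμinst : IsProbabilityMeasure μ := Measure.isProbabilityMeasure_map hXm.aemeasurable
  have hP : ∀ {A : Set (Γ → M)}, MeasurableSet A → Pr {ω | (fun k => X k ω) ∈ A} = μ A := by
    intro A hA
    rw [hμ, Measure.map_apply hXm hA]
    rfl
  set p : ℝ := (μ E).toReal with hp
  have key : ∀ ε : ℝ, 0 < ε → |p - p * p| ≤ 5 * ε := by
    intro ε hε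
    obtain ⟨V, hVcyl, hVε⟩ := exists_cylinder_approx μ hE hε
    have hVm : MeasurableSet V := .of_mem_measurableCylinders hVcyl
    obtain ⟨J, hJ⟩ := cylinder_determinedBy hVcyl
    obtain ⟨K, hK⟩ := hmix J V hJ ε hε
    obtain ⟨π, hπE, hπJK, hπdist⟩ := hsym (J ∪ K)
    set T : (Γ → M) → (Γ → M) := fun a k => a (π k) with hT
    have hTm : Measurable T := measurable_pi_lambda _ fun k => measurable_pi_apply _
    have hmapT : μ.map T = μ := by
      rw [hμ, Measure.map_map hTm hXm]
      exact hπdist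
    set W : Set (Γ → M) := T ⁻¹' V with hW
    have hWm : MeasurableSet W := hTm hVm
    have hWdet : DeterminedBy W ((↑K : Set Γ)ᶜ) := by
      refine (hJ.preimage π).mono ?_
      rintro x ⟨j, hj, rfl⟩ hx
      exact hπJK j (Finset.mem_union_left _ hj) (Finset.mem_union_right _ hx)
    have hmixx := hK W hWdet
    rw [hP (hVm.inter hWm), hP hVm, hP hWm] at hmixx
    have hμW : μ W = μ V := by
      rw [hW, ← Measure.map_apply hTm hVm, hmapT]
    have hTE : T ⁻¹' E = E := by
      ext a
      exact (hπE a).symm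
    have hEW : μ (E ∆ W) < ENNReal.ofReal ε := by
      have hEq : E ∆ W = T ⁻¹' (E ∆ V) := by
        rw [Set.preimage_symmDiff, hTE]
      rw [hEq, ← Measure.map_apply hTm (hE.symmDiff hVm), hmapT]
      exact hVε
    -- real-valued estimates
    have hVEr : |(μ V).toReal - p| < ε := by
      refine lt_of_le_of_lt ?_ (ENNReal.toReal_lt_of_lt_ofReal hVε)
      rw [symmDiff_comm]
      exact abs_toReal_sub_le μ V E
    have hsub : (V ∩ W) ∆ E ⊆ (V ∆ E) ∪ (W ∆ E) := by
      intro x hx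
      simp only [Set.symmDiff_def, Set.mem_union, Set.mem_diff, Set.mem_inter_iff,
        Set.sup_eq_union] at *
      tauto
    have hVWE : |(μ (V ∩ W)).toReal - p| < ε + ε := by
      refine lt_of_le_of_lt (abs_toReal_sub_le μ (V ∩ W) E) ?_
      have h1 : μ ((V ∩ W) ∆ E) < ENNReal.ofReal ε + ENNReal.ofReal ε := by
        refine lt_of_le_of_lt (le_trans (measure_mono hsub) (measure_union_le _ _)) ?_
        refine ENNReal.add_lt_add ?_ ?_
        · rw [symmDiff_comm]; exact hVε
        · rw [symmDiff_comm]; exact hEW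
      rw [← ENNReal.ofReal_add hε.le hε.le] at h1
      exact ENNReal.toReal_lt_of_lt_ofReal h1
    have hV1 : (μ V).toReal ≤ 1 := by
      simpa using ENNReal.toReal_mono (by simp) (prob_le_one (μ := μ) (s := V))
    have hp1 : p ≤ 1 := by
      simpa [hp] using ENNReal.toReal_mono (by simp) (prob_le_one (μ := μ) (s := E))
    have hV0 : 0 ≤ (μ V).toReal := ENNReal.toReal_nonneg
    have hp0 : 0 ≤ p := ENNReal.toReal_nonneg
    have hsq : |(μ V).toReal * (μ W).toReal - p * p| ≤ 2 * ε := by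
      rw [hμW]
      have : (μ V).toReal * (μ V).toReal - p * p
          = ((μ V).toReal - p) * ((μ V).toReal + p) := by ring
      rw [this, abs_mul]
      have h2 : |(μ V).toReal + p| ≤ 2 := by
        rw [abs_of_nonneg (by linarith)]; linarith
      calc |(μ V).toReal - p| * |(μ V).toReal + p| ≤ ε * 2 :=
            mul_le_mul hVEr.le h2 (abs_nonneg _) hε.le
        _ = 2 * ε := by ring
    have tri : |p - p * p| ≤ |p - (μ (V ∩ W)).toReal| + |(μ (V ∩ W)).toReal -
        (μ V).toReal * (μ W).toReal| + |(μ V).toReal * (μ W).toReal - p * p| := by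
      calc |p - p * p| ≤ |p - (μ (V ∩ W)).toReal| + |(μ (V ∩ W)).toReal - p * p| :=
            abs_sub_le _ _ _
        _ ≤ _ := by
            linarith [abs_sub_le ((μ (V ∩ W)).toReal) ((μ V).toReal * (μ W).toReal) (p * p)]
    have habs : |p - (μ (V ∩ W)).toReal| < ε + ε := by
      rw [abs_sub_comm]; exact hVWE
    linarith [tri, habs, hmixx, hsq]
  have hpp : p = p * p := by
    by_contra h
    have h0 : 0 < |p - p * p| := abs_pos.2 (sub_ne_zero.2 h)
    have := key (|p - p * p| / 10) (by positivity)
    linarith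
  have hμE1 : μ E ≠ ⊤ := measure_ne_top _ _
  rw [hP hE]
  have h0 : p * (1 - p) = 0 := by
    rw [mul_sub, mul_one]
    exact sub_eq_zero.2 hpp
  rcases mul_eq_zero.mp h0 with h | h
  · left
    exact ((ENNReal.toReal_eq_zero_iff _).1 h).resolve_right hμE1
  · right
    exact (ENNReal.toReal_eq_one_iff _).1 (by linarith)
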